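/- In linear function approximation with batch updates, the divergence between the batch-averaged implicit and explicit TD errors admits the explicit formula δⁱ − δᵉ = (1/B)·Σ_{k=1}^{B} δᵉ_k·((1/B)·Σ_{j=1}^{B} ⟨x_k, x_j⟩ − 1), where δᵉ = (1/B)·Σ_{k=1}^{B} δᵉ_k is the batch-averaged explicit TD error and δⁱ = (1/B)·Σ_{j=1}^{B} (1/α)·(⟨w', x_j⟩ − ⟨w, x_j⟩) is the batch-averaged implicit TD error under the batch semi-gradient update w' = w + (α/B)·Σ_{k=1}^{B} δᵉ_k·x_k with step size α ≠ 0. -/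
import Mathlib

open scoped RealInnerProductSpace

/-- Explicit formula for the divergence between the batch-averaged implicit and explicit
TD errors in linear function approximation with batch updates. -/
theorem batch_td_gap_formula
    {d B : ℕ} (hB : 0 < B)
    (x : Fin B → EuclideanSpace ℝ (Fin d)) (δe : Fin B → ℝ)
    (w : EuclideanSpace ℝ (Fin d)) (α : ℝ) (hα : α ≠ 0)
    (w' : EuclideanSpace ℝ (Fin d))
    (hupd : w' = w + (α / B) • ∑ k, δe k • x k)
    (δebar δibar : ℝ)
    (hδe : δebar = (1 / B) * ∑ k, δe k)
    (hδi : δibar = (1 / B) * ∑ j, (1 / α) * (⟪w', x j⟫ - ⟪w, x j⟫)) :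
    δibar - δebar
      = (1 / B) * ∑ k, δe k * ((1 / B) * (∑ j, ⟪x k, x j⟫) - 1) := by
  have h : ∀ j, ⟪w', x j⟫ - ⟪w, x j⟫ = (α / B) * ∑ k, δe k * ⟪x k, x j⟫ := by
    intro j
    rw [hupd, inner_add_left, real_inner_smul_left, add_sub_cancel_left, sum_inner]
    simp only [real_inner_smul_left]
  have hsum : ∑ j, (1 / α) * (⟪w', x j⟫ - ⟪w, x j⟫)
      = ∑ k, δe k * ((1 / B) * ∑ j, ⟪x k, x j⟫) := by
    simp only [h, Finset.mul_sum]
    rw [Finset.sum_comm]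
    refine Finset.sum_congr rfl fun k _ => Finset.sum_congr rfl fun j _ => ?_
    field_simp
  rw [hδi, hδe, hsum, ← mul_sub, ← Finset.sum_sub_distrib]
  congr 1
  exact Finset.sum_congr rfl fun k _ => by ring
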